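/- Let Y = blockdiag(P¹, P²), where for j = 1, 2 the matrix Pʲ is a nonempty finite product of matrices of the form D(Aʲ_g) with each Aʲ_g an AIMD matrix, and at least one factor of each Pʲ equals D(B) with B the full back-off matrix. Then for every nonzero z ∈ W, the strict contraction property ‖Yz‖ < ‖z‖ holds. -/

import Mathlib

noncomputable def l1 {n : ℕ} (z : Fin n → ℝ) : ℝ := ∑ i, |z i|

noncomputable def normT {n T : ℕ} (z : Fin T → Fin n → ℝ) : ℝ := ⨆ ℓ, l1 (z ℓ)

/-- The action of the block matrix `D(A)` on a block vector `z ∈ ℝ^{Tn}`: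
`(D(A)z)₁ = A z₁` and `(D(A)z)_r = (1/r)·A z₁ + ((r−1)/r)·z_{r−1}` for `r = 2,…,T`
(indices here are 0-based). -/
noncomputable def DApply {n T : ℕ} (A : Matrix (Fin n) (Fin n) ℝ)
    (z : Fin T → Fin n → ℝ) : Fin T → Fin n → ℝ :=
  fun r => (1 / ((r : ℕ) + 1) : ℝ) • A.mulVec (z ⟨0, r.pos⟩)
    + (((r : ℕ) : ℝ) / ((r : ℕ) + 1)) • z ⟨(r : ℕ) - 1, lt_of_le_of_lt (Nat.pred_le _) r.isLt⟩

/-- `A` is an AIMD matrix: `A = diag(β̃) + (1/n)·e·(eᵀ − β̃ᵀ)` where each `β̃ᵢ ∈ {β, 1}`. -/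
def IsAIMD (n : ℕ) (β : ℝ) (A : Matrix (Fin n) (Fin n) ℝ) : Prop :=
  ∃ b : Fin n → ℝ, (∀ i, b i = β ∨ b i = 1) ∧
    A = Matrix.diagonal b + (1 / (n : ℝ)) • Matrix.of (fun _ j => 1 - b j)

/-- The full back-off AIMD matrix `B = β·I + ((1−β)/n)·e·eᵀ`. -/
noncomputable def Bmat (n : ℕ) (β : ℝ) : Matrix (Fin n) (Fin n) ℝ :=
  β • (1 : Matrix (Fin n) (Fin n) ℝ) + ((1 - β) / (n : ℝ)) • Matrix.of (fun _ _ => (1 : ℝ))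

/-- The norm on pairs: `‖(y¹, y²)‖ = max{‖y¹‖_T, ‖y²‖_T}`. -/
noncomputable def normPair {n T : ℕ} (y : (Fin T → Fin n → ℝ) × (Fin T → Fin n → ℝ)) : ℝ :=
  max (normT y.1) (normT y.2)

/-! ### Auxiliary lemmas -/

lemma l1_nonneg {n : ℕ} (z : Fin n → ℝ) : 0 ≤ l1 z :=
  Finset.sum_nonneg fun _ _ => abs_nonneg _

lemma l1_smul {n : ℕ} (a : ℝ) (z : Fin n → ℝ) : l1 (a • z) = |a| * l1 z := by
  simp [l1, Finset.mul_sum, abs_mul]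

lemma l1_add_le {n : ℕ} (x y : Fin n → ℝ) : l1 (x + y) ≤ l1 x + l1 y := by
  rw [l1, l1, l1, ← Finset.sum_add_distrib]
  exact Finset.sum_le_sum fun i _ => abs_add_le _ _

lemma le_normT {n T : ℕ} (z : Fin T → Fin n → ℝ) (ℓ : Fin T) : l1 (z ℓ) ≤ normT z := by
  rw [normT]
  exact le_ciSup (f := fun ℓ => l1 (z ℓ)) (Set.Finite.bddAbove (Set.finite_range _)) ℓ

lemma normT_le {n T : ℕ} (hT : 0 < T) (z : Fin T → Fin n → ℝ) (a : ℝ)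
    (h : ∀ ℓ, l1 (z ℓ) ≤ a) : normT z ≤ a := by
  have : Nonempty (Fin T) := ⟨⟨0, hT⟩⟩
  rw [normT]
  exact ciSup_le h

lemma normT_nonneg {n T : ℕ} (hT : 0 < T) (z : Fin T → Fin n → ℝ) : 0 ≤ normT z :=
  le_trans (l1_nonneg _) (le_normT z ⟨0, hT⟩)

lemma normT_pos {n T : ℕ} (hT : 0 < T) (z : Fin T → Fin n → ℝ) (hz : z ≠ 0) :
    0 < normT z := by
  obtain ⟨t, ht⟩ := Function.ne_iff.mp hz
  obtain ⟨i, hi⟩ := Function.ne_iff.mp ht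
  have h1 : 0 < l1 (z t) := by
    have h2 : |z t i| ≤ l1 (z t) := by
      rw [l1]
      exact Finset.single_le_sum (f := fun j => |z t j|) (fun j _ => abs_nonneg _)
        (Finset.mem_univ i)
    have h3 : 0 < |z t i| := abs_pos.mpr hi
    linarith
  exact lt_of_lt_of_le h1 (le_normT z t)

lemma aimd_nonneg {n : ℕ} {β : ℝ} (hβ0 : 0 < β) (hβ1 : β < 1)
    {A : Matrix (Fin n) (Fin n) ℝ} (hA : IsAIMD n β A) (i j : Fin n) : 0 ≤ A i j := by
  obtain ⟨b, hb, rfl⟩ := hA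
  have hb0 : 0 < b j := by rcases hb j with h | h <;> simp [h] <;> linarith
  have hb1 : b j ≤ 1 := by rcases hb j with h | h <;> simp [h] <;> linarith
  have hn0 : (0 : ℝ) ≤ ((n : ℝ))⁻¹ := by positivity
  have key : 0 ≤ ((n : ℝ))⁻¹ * (1 - b j) := mul_nonneg hn0 (by linarith)
  simp only [Matrix.add_apply, Matrix.smul_apply, Matrix.of_apply, smul_eq_mul,
    Matrix.diagonal_apply]
  by_cases h : i = j
  · simp [h]
    linarith
  · simp [h]
    linarith

lemma aimd_colsum {n : ℕ} {β : ℝ} (hn : 0 < n)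
    {A : Matrix (Fin n) (Fin n) ℝ} (hA : IsAIMD n β A) (j : Fin n) : ∑ i, A i j = 1 := by
  obtain ⟨b, hb, rfl⟩ := hA
  have hn' : (n : ℝ) ≠ 0 := Nat.cast_ne_zero.mpr hn.ne'
  simp only [Matrix.add_apply, Matrix.smul_apply, Matrix.of_apply, smul_eq_mul,
    Matrix.diagonal_apply, Finset.sum_add_distrib]
  rw [Finset.sum_ite_eq' Finset.univ j b]
  simp [Finset.sum_const, hn']

lemma stoch_mulVec_l1 {n : ℕ} {A : Matrix (Fin n) (Fin n) ℝ}
    (h0 : ∀ i j, 0 ≤ A i j) (h1 : ∀ j, ∑ i, A i j = 1) (x : Fin n → ℝ) :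
    l1 (A.mulVec x) ≤ l1 x := by
  rw [l1, l1]
  calc ∑ i, |A.mulVec x i| ≤ ∑ i, ∑ j, A i j * |x j| := by
        apply Finset.sum_le_sum
        intro i _
        rw [Matrix.mulVec, dotProduct]
        refine le_trans (Finset.abs_sum_le_sum_abs _ _) ?_
        apply Finset.sum_le_sum
        intro j _
        rw [abs_mul, abs_of_nonneg (h0 i j)]
    _ = ∑ j, (∑ i, A i j) * |x j| := by
        rw [Finset.sum_comm]
        simp [Finset.sum_mul]
    _ = ∑ j, |x j| := by simp [h1]

lemma stoch_mulVec_sum {n : ℕ} {A : Matrix (Fin n) (Fin n) ℝ}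
    (h1 : ∀ j, ∑ i, A i j = 1) (x : Fin n → ℝ) :
    ∑ i, A.mulVec x i = ∑ j, x j := by
  simp only [Matrix.mulVec, dotProduct]
  rw [Finset.sum_comm]
  simp [← Finset.sum_mul, h1]

lemma Bmat_mulVec {n : ℕ} {β : ℝ} (x : Fin n → ℝ) (hx : ∑ i, x i = 0) :
    (Bmat n β).mulVec x = β • x := by
  funext i
  simp only [Bmat, Matrix.mulVec, dotProduct, Matrix.add_apply, Matrix.smul_apply,
    Matrix.of_apply, smul_eq_mul, Matrix.one_apply, Pi.smul_apply]
  simp only [add_mul, Finset.sum_add_distrib]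
  rw [← Finset.mul_sum, hx]
  simp [Finset.sum_ite_eq' Finset.univ i, mul_comm]

lemma DApply_sum_zero {n T : ℕ} (hn : 0 < n) {β : ℝ}
    {A : Matrix (Fin n) (Fin n) ℝ} (hA : IsAIMD n β A)
    (z : Fin T → Fin n → ℝ) (hz : ∀ t, ∑ i, z t i = 0) (r : Fin T) :
    ∑ i, DApply A z r i = 0 := by
  simp only [DApply, Pi.add_apply, Pi.smul_apply, smul_eq_mul, Finset.sum_add_distrib,
    ← Finset.mul_sum]
  rw [stoch_mulVec_sum (aimd_colsum hn hA), hz, hz]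
  ring

lemma DApply_block_bound {n T : ℕ} (A : Matrix (Fin n) (Fin n) ℝ)
    (z : Fin T → Fin n → ℝ) (r : Fin T) (K M : ℝ)
    (hK : l1 (A.mulVec (z ⟨0, r.pos⟩)) ≤ K)
    (hM : ∀ t, l1 (z t) ≤ M) :
    l1 (DApply A z r) ≤ (1 / ((r : ℕ) + 1)) * K + (((r : ℕ) : ℝ) / ((r : ℕ) + 1)) * M := by
  have c1 : (0 : ℝ) ≤ 1 / ((r : ℕ) + 1) := by positivity
  have c2 : (0 : ℝ) ≤ ((r : ℕ) : ℝ) / ((r : ℕ) + 1) := by positivity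
  calc l1 (DApply A z r)
      ≤ l1 ((1 / ((r : ℕ) + 1) : ℝ) • A.mulVec (z ⟨0, r.pos⟩))
        + l1 ((((r : ℕ) : ℝ) / ((r : ℕ) + 1)) •
            z ⟨(r : ℕ) - 1, lt_of_le_of_lt (Nat.pred_le _) r.isLt⟩) := l1_add_le _ _
    _ = (1 / ((r : ℕ) + 1)) * l1 (A.mulVec (z ⟨0, r.pos⟩))
        + (((r : ℕ) : ℝ) / ((r : ℕ) + 1)) *
            l1 (z ⟨(r : ℕ) - 1, lt_of_le_of_lt (Nat.pred_le _) r.isLt⟩) := by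
        rw [l1_smul, l1_smul, abs_of_nonneg c1, abs_of_nonneg c2]
    _ ≤ (1 / ((r : ℕ) + 1)) * K + (((r : ℕ) : ℝ) / ((r : ℕ) + 1)) * M := by
        gcongr
        exact hM _

lemma normT_DApply_le {n T : ℕ} (hn : 0 < n) (hT : 0 < T) {β : ℝ}
    (hβ0 : 0 < β) (hβ1 : β < 1) {A : Matrix (Fin n) (Fin n) ℝ} (hA : IsAIMD n β A)
    (z : Fin T → Fin n → ℝ) : normT (DApply A z) ≤ normT z := by
  apply normT_le hT
  intro r
  have hK : l1 (A.mulVec (z ⟨0, r.pos⟩)) ≤ normT z :=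
    le_trans (stoch_mulVec_l1 (aimd_nonneg hβ0 hβ1 hA) (aimd_colsum hn hA) _) (le_normT z _)
  have h := DApply_block_bound A z r (normT z) (normT z) hK (fun t => le_normT z t)
  have hr : ((r : ℕ) : ℝ) + 1 ≠ 0 := by positivity
  have heq : (1 / (((r : ℕ) : ℝ) + 1)) * normT z
      + (((r : ℕ) : ℝ) / (((r : ℕ) : ℝ) + 1)) * normT z = normT z := by
    field_simp
    ring
  linarith

lemma normT_DApply_B {n T : ℕ} (hT : 0 < T) {β : ℝ}
    (hβ0 : 0 < β) (hβ1 : β < 1)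
    (z : Fin T → Fin n → ℝ) (hz : ∀ t, ∑ i, z t i = 0) :
    normT (DApply (Bmat n β) z) ≤ ((β + (T : ℝ) - 1) / (T : ℝ)) * normT z := by
  apply normT_le hT
  intro r
  have hM0 : 0 ≤ normT z := normT_nonneg hT z
  have hK : l1 ((Bmat n β).mulVec (z ⟨0, r.pos⟩)) ≤ β * normT z := by
    rw [Bmat_mulVec _ (hz _), l1_smul, abs_of_pos hβ0]
    exact mul_le_mul_of_nonneg_left (le_normT z _) hβ0.le
  have h := DApply_block_bound (Bmat n β) z r (β * normT z) (normT z) hK (fun t => le_normT z t)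
  have hrT : ((r : ℕ) : ℝ) + 1 ≤ (T : ℝ) := by
    have := r.isLt
    exact_mod_cast Nat.succ_le_of_lt this
  have hr0 : (0 : ℝ) < ((r : ℕ) : ℝ) + 1 := by positivity
  have hT0 : (0 : ℝ) < (T : ℝ) := by exact_mod_cast hT
  have key : (1 / (((r : ℕ) : ℝ) + 1)) * (β * normT z)
      + (((r : ℕ) : ℝ) / (((r : ℕ) : ℝ) + 1)) * normT z
      ≤ ((β + (T : ℝ) - 1) / (T : ℝ)) * normT z := by
    set q : ℝ := ((r : ℕ) : ℝ)
    have hfrac : (β + q) / (q + 1) ≤ (β + (T : ℝ) - 1) / (T : ℝ) := by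
      rw [div_le_div_iff₀ hr0 hT0]
      nlinarith
    have hlhs : (1 / (q + 1)) * (β * normT z) + (q / (q + 1)) * normT z
        = ((β + q) / (q + 1)) * normT z := by
      field_simp
    rw [hlhs]
    exact mul_le_mul_of_nonneg_right hfrac hM0
  linarith

lemma foldl_props {n T : ℕ} (hn : 0 < n) (hT : 0 < T) {β : ℝ}
    (hβ0 : 0 < β) (hβ1 : β < 1) :
    ∀ (L : List (Matrix (Fin n) (Fin n) ℝ)) (z : Fin T → Fin n → ℝ),
      (∀ A ∈ L, IsAIMD n β A) → (∀ t, ∑ i, z t i = 0) →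
      (∀ t, ∑ i, (L.foldl (fun v Ag => DApply Ag v) z) t i = 0) ∧
      normT (L.foldl (fun v Ag => DApply Ag v) z) ≤ normT z ∧
      (Bmat n β ∈ L →
        normT (L.foldl (fun v Ag => DApply Ag v) z)
          ≤ ((β + (T : ℝ) - 1) / (T : ℝ)) * normT z) := by
  intro L
  induction L with
  | nil => exact fun z _ hz => ⟨hz, le_refl _, by simp⟩
  | cons A L ih =>
    intro z hL hz
    have hA : IsAIMD n β A := hL A (List.mem_cons_self)
    have hw_sum : ∀ t, ∑ i, DApply A z t i = 0 := DApply_sum_zero hn hA z hz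
    have hw_norm : normT (DApply A z) ≤ normT z := normT_DApply_le hn hT hβ0 hβ1 hA z
    obtain ⟨s, h1, h2⟩ := ih (DApply A z) (fun A' hA' => hL A' (List.mem_cons_of_mem _ hA')) hw_sum
    have hc0 : (0 : ℝ) ≤ (β + (T : ℝ) - 1) / (T : ℝ) := by
      have hT1 : (1 : ℝ) ≤ (T : ℝ) := by exact_mod_cast hT
      have hT0 : (0 : ℝ) < (T : ℝ) := by exact_mod_cast hT
      exact div_nonneg (by linarith) hT0.le
    refine ⟨s, h1.trans hw_norm, ?_⟩
    intro hmem
    rcases List.mem_cons.mp hmem with he | hmem'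
    · have hB : normT (DApply A z) ≤ ((β + (T : ℝ) - 1) / (T : ℝ)) * normT z := by
        rw [← he] at *
        exact normT_DApply_B hT hβ0 hβ1 z hz
      exact h1.trans hB
    · calc normT (L.foldl (fun v Ag => DApply Ag v) (DApply A z))
          ≤ ((β + (T : ℝ) - 1) / (T : ℝ)) * normT (DApply A z) := h2 hmem'
        _ ≤ ((β + (T : ℝ) - 1) / (T : ℝ)) * normT z :=
            mul_le_mul_of_nonneg_left hw_norm hc0

/-- Let `Y = blockdiag(P¹, P²)`, where each `Pʲ` is a nonempty finite product of matrices
`D(Aʲ_g)` with each `Aʲ_g` an AIMD matrix, and at least one factor of each `Pʲ` equals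
`D(B)`. Then `‖Yz‖ < ‖z‖` for every nonzero `z ∈ W`. -/
theorem Y_strict_contraction_on_W
    (n T : ℕ) (hn : 0 < n) (hT : 0 < T)
    (β : ℝ) (hβ0 : 0 < β) (hβ1 : β < 1)
    (m1 m2 : ℕ) (hm1 : 0 < m1) (hm2 : 0 < m2)
    (A1 : Fin m1 → Matrix (Fin n) (Fin n) ℝ)
    (A2 : Fin m2 → Matrix (Fin n) (Fin n) ℝ)
    (hA1 : ∀ g, IsAIMD n β (A1 g)) (hA2 : ∀ g, IsAIMD n β (A2 g))
    (hB1 : ∃ g, A1 g = Bmat n β) (hB2 : ∃ g, A2 g = Bmat n β)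
    (z1 z2 : Fin T → Fin n → ℝ)
    (hz1 : ∀ t, ∑ i, z1 t i = 0) (hz2 : ∀ t, ∑ i, z2 t i = 0)
    (hz0 : ¬(z1 = 0 ∧ z2 = 0)) :
    normPair ((List.ofFn A1).foldl (fun v Ag => DApply Ag v) z1,
              (List.ofFn A2).foldl (fun v Ag => DApply Ag v) z2) <
    normPair (z1, z2) := by
  set c : ℝ := (β + (T : ℝ) - 1) / (T : ℝ) with hc
  have hT0 : (0 : ℝ) < (T : ℝ) := by exact_mod_cast hT
  have hT1 : (1 : ℝ) ≤ (T : ℝ) := by exact_mod_cast hT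
  have hc0 : 0 ≤ c := by
    rw [hc]
    exact div_nonneg (by linarith) hT0.le
  have hc1 : c < 1 := by
    rw [hc, div_lt_one hT0]
    linarith
  have hL1 : ∀ A ∈ List.ofFn A1, IsAIMD n β A := by
    intro A hA
    obtain ⟨g, rfl⟩ := List.mem_ofFn.mp hA
    exact hA1 g
  have hL2 : ∀ A ∈ List.ofFn A2, IsAIMD n β A := by
    intro A hA
    obtain ⟨g, rfl⟩ := List.mem_ofFn.mp hA
    exact hA2 g
  obtain ⟨g1, hg1⟩ := hB1
  obtain ⟨g2, hg2⟩ := hB2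
  have hmem1 : Bmat n β ∈ List.ofFn A1 := List.mem_ofFn.mpr ⟨g1, hg1⟩
  have hmem2 : Bmat n β ∈ List.ofFn A2 := List.mem_ofFn.mpr ⟨g2, hg2⟩
  obtain ⟨_, _, hP1⟩ := foldl_props hn hT hβ0 hβ1 (List.ofFn A1) z1 hL1 hz1
  obtain ⟨_, _, hP2⟩ := foldl_props hn hT hβ0 hβ1 (List.ofFn A2) z2 hL2 hz2
  have h1 := hP1 hmem1
  have h2 := hP2 hmem2
  set M : ℝ := normPair (z1, z2) with hM
  have hM1 : normT z1 ≤ M := le_max_left _ _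
  have hM2 : normT z2 ≤ M := le_max_right _ _
  have hMpos : 0 < M := by
    rcases not_and_or.mp hz0 with h | h
    · exact lt_of_lt_of_le (normT_pos hT z1 h) hM1
    · exact lt_of_lt_of_le (normT_pos hT z2 h) hM2
  have hout : normPair ((List.ofFn A1).foldl (fun v Ag => DApply Ag v) z1,
      (List.ofFn A2).foldl (fun v Ag => DApply Ag v) z2) ≤ c * M := by
    apply max_le
    · exact h1.trans (mul_le_mul_of_nonneg_left hM1 hc0)
    · exact h2.trans (mul_le_mul_of_nonneg_left hM2 hc0)
  have : c * M < M := by nlinarith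
  linarith
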